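/- Smallest eigenvalue via odd flows: Let q̃ and q be symmetric probability measures on a finite group G and S ⊆ supp(q) a symmetric set. Suppose η is a (q̃,q)-odd flow, i.e., a nonnegative function on odd-length paths in the Cayley graph (G,S) from the identity, such that for each y the total flow along odd paths from e to y equals q̃(y). Then the least eigenvalues satisfy β_min ≥ −1 + (1 + β̃_min)/A(η), where A(η) = max_{s∈S} (1/q(s)) Σ_δ |δ|·N(s,δ)·η(δ) and N(s,δ) counts the uses of generator s along δ. -/

import Mathlib

open Finset

private lemma stmt8_tele (a : ℕ → ℝ) (k : ℕ) :
    ∑ i ∈ Finset.range k, (-1:ℝ)^i * (a i + a (i+1)) = a 0 - (-1)^k * a k := by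
  induction k with
  | zero => simp
  | succ n ih => rw [Finset.sum_range_succ, ih]; ring

private lemma stmt8_sum_getD {α : Type*} (l : List α) (d : α) (f : α → ℝ) :
    ∑ i ∈ Finset.range l.length, f (l.getD i d) = (l.map f).sum := by
  induction l with
  | nil => simp
  | cons a t ih =>
    rw [List.length_cons, Finset.sum_range_succ']
    simp only [List.getD, List.getElem?_cons_succ, List.getElem?_cons_zero, Option.getD_some] at *
    rw [ih, List.map_cons, List.sum_cons, add_comm]

private lemma stmt8_shift {G : Type*} [Fintype G] [Group G] (g : G → ℝ) (a : G) :
    ∑ x, g (x * a) = ∑ x, g x := Equiv.sum_comp (Equiv.mulRight a) g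

private lemma stmt8_path_bound {G : Type*} [Fintype G] [Group G] (f : G → ℝ) (l : List G)
    (hodd : Odd l.length) :
    ∑ x, (f x + f (x * l.prod))^2
      ≤ (l.length : ℝ) * (l.map (fun s => ∑ x, (f x + f (x * s))^2)).sum := by
  have key : ∀ x : G, (f x + f (x * l.prod))^2
      ≤ (l.length:ℝ) * ∑ i ∈ range l.length,
          (f (x * (l.take i).prod) + f (x * (l.take (i+1)).prod))^2 := by
    intro x
    have ht := stmt8_tele (fun i => f (x * (l.take i).prod)) l.length
    rw [hodd.neg_one_pow] at ht
    simp only [List.take_zero, List.prod_nil, mul_one, List.take_length,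
      neg_mul, one_mul, sub_neg_eq_add] at ht
    rw [← ht]
    calc (∑ i ∈ range l.length, (-1:ℝ)^i * (f (x * (l.take i).prod) + f (x * (l.take (i+1)).prod)))^2
        ≤ (range l.length).card * ∑ i ∈ range l.length,
            ((-1:ℝ)^i * (f (x * (l.take i).prod) + f (x * (l.take (i+1)).prod)))^2 :=
          sq_sum_le_card_mul_sum_sq
      _ = (l.length:ℝ) * ∑ i ∈ range l.length,
            (f (x * (l.take i).prod) + f (x * (l.take (i+1)).prod))^2 := by
          rw [Finset.card_range]
          congr 1
          refine Finset.sum_congr rfl fun i _ => ?_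
          rw [mul_pow, ← pow_mul, mul_comm i 2, pow_mul, neg_one_sq, one_pow, one_mul]
  calc ∑ x, (f x + f (x * l.prod))^2
      ≤ ∑ x : G, (l.length:ℝ) * ∑ i ∈ range l.length,
          (f (x * (l.take i).prod) + f (x * (l.take (i+1)).prod))^2 :=
        Finset.sum_le_sum fun x _ => key x
    _ = (l.length:ℝ) * ∑ i ∈ range l.length, ∑ x : G,
          (f (x * (l.take i).prod) + f (x * (l.take (i+1)).prod))^2 := by
        rw [← Finset.mul_sum, Finset.sum_comm]
    _ = (l.length:ℝ) * ∑ i ∈ range l.length, ∑ x : G, (f x + f (x * l.getD i 1))^2 := by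
        congr 1
        refine Finset.sum_congr rfl fun i hi => ?_
        have hi' : i < l.length := Finset.mem_range.1 hi
        have h1 : (l.take (i+1)).prod = (l.take i).prod * l.getD i 1 := by
          rw [List.prod_take_succ l i hi', List.getD_eq_getElem l 1 hi']
        rw [h1]
        have := stmt8_shift (fun x => (f x + f (x * l.getD i 1))^2) ((l.take i).prod)
        simp only [mul_assoc] at this ⊢
        exact this
    _ = (l.length:ℝ) * (l.map (fun s => ∑ x, (f x + f (x * s))^2)).sum := by
        rw [← stmt8_sum_getD l 1 (fun s => ∑ x, (f x + f (x * s))^2)]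

/-- `β` is an eigenvalue of the Markov operator `Qf(x) = Σ_y f(xy) q(y)` of `q`. -/
def IsEig {G : Type*} [Fintype G] [Group G] (q : G → ℝ) (β : ℝ) : Prop :=
  ∃ f : G → ℝ, f ≠ 0 ∧ ∀ x, ∑ y, f (x * y) * q y = β * f x

private lemma stmt8_rayleigh {G : Type*} [Fintype G] [Group G] (qt : G → ℝ)
    (hqtsym : ∀ g, qt g⁻¹ = qt g) (βtmin : ℝ)
    (hβtle : ∀ β', IsEig qt β' → βtmin ≤ β')
    (f : G → ℝ) (hf : f ≠ 0) :
    βtmin * ∑ x, f x ^ 2 ≤ ∑ x, f x * ∑ y, f (x * y) * qt y := by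
  classical
  let T : EuclideanSpace ℝ G →ₗ[ℝ] EuclideanSpace ℝ G :=
    { toFun := fun v => (WithLp.toLp 2 (fun x => ∑ y, v (x * y) * qt y) : EuclideanSpace ℝ G)
      map_add' := by
        intro u v
        ext x
        show ∑ y, (u (x*y) + v (x*y)) * qt y = _
        simp [add_mul, Finset.sum_add_distrib]
      map_smul' := by
        intro c v
        ext x
        show ∑ y, (c * v (x*y)) * qt y = _
        simp [Finset.mul_sum, mul_assoc] }
  have hTapp : ∀ (v : EuclideanSpace ℝ G) (x : G), T v x = ∑ y, v (x * y) * qt y :=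
    fun v x => rfl
  have hinner : ∀ u v : EuclideanSpace ℝ G, (inner ℝ u v : ℝ) = ∑ x, u x * v x := by
    intro u v
    simp [PiLp.inner_apply, RCLike.inner_apply, conj_trivial]
    exact Finset.sum_congr rfl fun x _ => mul_comm _ _
  have hsym : T.IsSymmetric := by
    intro u v
    rw [hinner, hinner]
    have step : ∀ w z : EuclideanSpace ℝ G, ∑ x, (T w) x * z x
        = ∑ y, ∑ x, (w x * z (x * y)) * qt y := by
      intro w z
      calc ∑ x, (T w) x * z x = ∑ x, ∑ y, (w (x*y) * z x) * qt y := by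
            refine Finset.sum_congr rfl fun x _ => ?_
            rw [hTapp, Finset.sum_mul]
            exact Finset.sum_congr rfl fun y _ => by ring
        _ = ∑ y, ∑ x, (w (x*y) * z x) * qt y := Finset.sum_comm
        _ = ∑ y, ∑ x, (w x * z (x * y⁻¹)) * qt y := by
            refine Finset.sum_congr rfl fun y _ => ?_
            have := stmt8_shift (fun x => (w (x*y) * z x) * qt y) y⁻¹
            rw [← this]
            refine Finset.sum_congr rfl fun x _ => by
              rw [inv_mul_cancel_right]
        _ = ∑ y, ∑ x, (w x * z (x * y)) * qt y := by
            rw [← Equiv.sum_comp (Equiv.inv G) (fun y => ∑ x, (w x * z (x * y)) * qt y)]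
            refine Finset.sum_congr rfl fun y _ => ?_
            simp only [Equiv.inv_apply]
            refine Finset.sum_congr rfl fun x _ => by rw [hqtsym]
    rw [step u v]
    rw [Finset.sum_comm]
    refine Finset.sum_congr rfl fun x _ => ?_
    rw [hTapp, Finset.mul_sum]
    exact Finset.sum_congr rfl fun y _ => by ring
  haveI : Nontrivial (EuclideanSpace ℝ G) := by
    refine ⟨0, (WithLp.toLp 2 (fun _ => 1) : EuclideanSpace ℝ G), fun h => ?_⟩
    simpa using congrArg (fun w => w 1) h
  set c : ℝ := ⨅ x : { x : EuclideanSpace ℝ G // x ≠ 0 },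
      RCLike.re ((inner ℝ (T x) x : ℝ)) / ‖(x : EuclideanSpace ℝ G)‖ ^ 2 with hc
  have hev : Module.End.HasEigenvalue T c := by
    have := hsym.hasEigenvalue_iInf_of_finiteDimensional
    exact this
  obtain ⟨v, hv⟩ := hev.exists_hasEigenvector
  have hceig : IsEig qt c := by
    refine ⟨v.ofLp, fun h => hv.2 (by ext x; exact congrFun h x), fun x => ?_⟩
    have := Module.End.mem_eigenspace_iff.1 hv.1
    have hx : T v x = (c • v) x := congrArg (fun w => w x) this
    rw [hTapp] at hx
    exact hx.trans rfl
  have hβc : βtmin ≤ c := hβtle c hceig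
  let T' := LinearMap.toContinuousLinearMap T
  have hbdd : BddBelow (Set.range fun x : { x : EuclideanSpace ℝ G // x ≠ 0 } =>
      RCLike.re ((inner ℝ (T x) x : ℝ)) / ‖(x : EuclideanSpace ℝ G)‖ ^ 2) := by
    refine ⟨-‖T'‖, fun r hr => ?_⟩
    obtain ⟨⟨x, hx⟩, rfl⟩ := hr
    have hxp : (0:ℝ) < ‖x‖ := norm_pos_iff.2 hx
    have hxn : (0:ℝ) < ‖x‖ ^ 2 := by positivity
    rw [le_div_iff₀ hxn]
    have h1 : |(inner ℝ (T x) x : ℝ)| ≤ ‖T x‖ * ‖x‖ := abs_real_inner_le_norm _ _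
    have h2 : ‖T x‖ ≤ ‖T'‖ * ‖x‖ := by
      have := T'.le_opNorm x
      exact this
    have h3 : -(‖T'‖ * ‖x‖ ^ 2) ≤ (inner ℝ (T x) x : ℝ) := by
      nlinarith [abs_nonneg ((inner ℝ (T x) x : ℝ)), neg_abs_le ((inner ℝ (T x) x : ℝ)),
        norm_nonneg x, norm_nonneg (T x)]
    simpa using h3
  let u : EuclideanSpace ℝ G := WithLp.toLp 2 f
  have hu : u ≠ 0 := by
    intro h
    apply hf
    funext x
    exact congrArg (fun w => w x) h
  have hcle : c ≤ RCLike.re ((inner ℝ (T u) u : ℝ)) / ‖u‖ ^ 2 := ciInf_le hbdd ⟨u, hu⟩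
  have hnorm : ‖u‖ ^ 2 = ∑ x, f x ^ 2 := by
    rw [EuclideanSpace.norm_eq, Real.sq_sqrt (by positivity)]
    refine Finset.sum_congr rfl fun x _ => by
      rw [Real.norm_eq_abs, sq_abs]
  have hinner2 : RCLike.re ((inner ℝ (T u) u : ℝ)) = ∑ x, (∑ y, f (x * y) * qt y) * f x := by
    rw [hinner]
    simp only [RCLike.re_to_real]
    rfl
  have hN : (0:ℝ) < ∑ x, f x ^ 2 := by
    rcases Function.ne_iff.1 hf with ⟨x0, hx0⟩
    have habs : (0:ℝ) < |f x0| := abs_pos.2 hx0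
    have : (0:ℝ) < f x0 ^ 2 := by rw [← sq_abs]; positivity
    exact lt_of_lt_of_le this (Finset.single_le_sum (fun x _ => sq_nonneg (f x))
      (Finset.mem_univ x0))
  rw [hnorm, hinner2] at hcle
  have : βtmin ≤ (∑ x, (∑ y, f (x * y) * qt y) * f x) / ∑ x, f x ^ 2 := le_trans hβc hcle
  rw [le_div_iff₀ hN] at this
  calc βtmin * ∑ x, f x ^ 2 ≤ ∑ x, (∑ y, f (x * y) * qt y) * f x := by linarith
    _ = ∑ x, f x * ∑ y, f (x * y) * qt y := Finset.sum_congr rfl fun x _ => by ring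

/-- Smallest eigenvalue via odd flows: given symmetric probability
measures `q̃, q` on a finite group `G`, a symmetric set `S ⊆ supp(q)`, and a
`(q̃,q)`-odd flow `η` (supported on the finite set `D` of odd-length paths from the
identity with steps in `S`, routing mass `q̃(y)` to each `y`), every eigenvalue `β` of
`q` satisfies `β ≥ −1 + (1 + β̃_min)/A(η)` where `β̃_min` is the least eigenvalue of
`q̃` and `A(η) = max_{s∈S} (1/q(s)) Σ_δ |δ| N(s,δ) η(δ)`. -/
theorem stmt8 {G : Type*} [Fintype G] [Group G] [DecidableEq G]
    (q qt : G → ℝ)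
    (hq0 : ∀ g, 0 ≤ q g) (hq1 : ∑ g, q g = 1) (hqsym : ∀ g, q g⁻¹ = q g)
    (hqt0 : ∀ g, 0 ≤ qt g) (hqt1 : ∑ g, qt g = 1) (hqtsym : ∀ g, qt g⁻¹ = qt g)
    (S : Finset G) (hS : S.Nonempty)
    (hSsupp : ∀ s ∈ S, 0 < q s) (hSsym : ∀ s ∈ S, s⁻¹ ∈ S)
    (D : Finset (List G)) (η : List G → ℝ)
    (hη0 : ∀ δ, 0 ≤ η δ) (hηD : ∀ δ ∉ D, η δ = 0)
    (hodd : ∀ δ ∈ D, Odd δ.length)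
    (hsteps : ∀ δ ∈ D, ∀ s ∈ δ, s ∈ S)
    (hflow : ∀ y : G, ∑ δ ∈ D.filter (fun δ => δ.prod = y), η δ = qt y)
    (A : ℝ)
    (hA : A = S.sup' hS
      (fun s => (1 / q s) * ∑ δ ∈ D, (δ.length : ℝ) * (δ.count s : ℝ) * η δ))
    (βtmin : ℝ) (hβtmin : IsEig qt βtmin) (hβtle : ∀ β', IsEig qt β' → βtmin ≤ β')
    (β : ℝ) (hβ : IsEig q β) :
    -1 + (1 + βtmin) / A ≤ β := by
  classical
  obtain ⟨f, hf0, hfeig⟩ := hβ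
  set N : ℝ := ∑ x, f x ^ 2 with hNdef
  have hN : (0:ℝ) < N := by
    rcases Function.ne_iff.1 hf0 with ⟨x0, hx0⟩
    have habs : (0:ℝ) < |f x0| := abs_pos.2 hx0
    have : (0:ℝ) < f x0 ^ 2 := by rw [← sq_abs]; positivity
    exact lt_of_lt_of_le this (Finset.single_le_sum (fun x _ => sq_nonneg (f x))
      (Finset.mem_univ x0))
  set Eg : G → ℝ := fun y => ∑ x, (f x + f (x * y))^2 with hEgdef
  have hEg0 : ∀ y, 0 ≤ Eg y := fun y => Finset.sum_nonneg fun x _ => sq_nonneg _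
  -- general expansion of weighted energy
  have hexp : ∀ p : G → ℝ, ∑ y, p y * Eg y
      = (∑ y, p y) * (2*N) + 2 * ∑ x, f x * ∑ y, f (x*y) * p y := by
    intro p
    have hEgy : ∀ y, Eg y = 2*N + 2 * ∑ x, f x * f (x*y) := by
      intro y
      have h1 : ∑ x, (f (x * y))^2 = N := stmt8_shift (fun x => f x ^ 2) y
      calc Eg y = ∑ x, (f x ^ 2 + f (x*y)^2 + 2 * (f x * f (x*y))) := by
            refine Finset.sum_congr rfl fun x _ => by ring
        _ = N + N + 2 * ∑ x, f x * f (x*y) := by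
            rw [Finset.sum_add_distrib, Finset.sum_add_distrib, h1, ← Finset.mul_sum]
        _ = 2*N + 2 * ∑ x, f x * f (x*y) := by ring
    calc ∑ y, p y * Eg y = ∑ y, (p y * (2*N) + 2 * ∑ x, (f x * f (x*y)) * p y) := by
          refine Finset.sum_congr rfl fun y _ => ?_
          rw [hEgy y, ← Finset.sum_mul]
          ring
      _ = (∑ y, p y) * (2*N) + 2 * ∑ y, ∑ x, (f x * f (x*y)) * p y := by
          rw [Finset.sum_add_distrib, ← Finset.sum_mul, ← Finset.mul_sum]
      _ = (∑ y, p y) * (2*N) + 2 * ∑ x, f x * ∑ y, f (x*y) * p y := by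
          rw [Finset.sum_comm]
          congr 1
          rw [mul_eq_mul_left_iff]
          left
          refine Finset.sum_congr rfl fun x _ => ?_
          rw [Finset.mul_sum]
          exact Finset.sum_congr rfl fun y _ => by ring
  -- energy of q
  have hq_energy : ∑ y, q y * Eg y = 2*N + 2*β*N := by
    rw [hexp q, hq1]
    have : ∑ x, f x * ∑ y, f (x*y) * q y = β * N := by
      calc ∑ x, f x * ∑ y, f (x*y) * q y = ∑ x, f x * (β * f x) := by
            refine Finset.sum_congr rfl fun x _ => by rw [hfeig x]
        _ = β * N := by rw [hNdef, Finset.mul_sum]; exact Finset.sum_congr rfl fun x _ => by ring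
    rw [this]; ring
  -- lower bound for qt energy
  have hqt_energy : 2*N + 2*βtmin*N ≤ ∑ y, qt y * Eg y := by
    rw [hexp qt, hqt1]
    have := stmt8_rayleigh qt hqtsym βtmin hβtle f hf0
    rw [← hNdef] at this
    nlinarith [this]
  -- flow decomposition
  have hdecomp : ∑ y, qt y * Eg y = ∑ δ ∈ D, η δ * Eg δ.prod := by
    calc ∑ y, qt y * Eg y = ∑ y, ∑ δ ∈ D.filter (fun δ => δ.prod = y), η δ * Eg δ.prod := by
          refine Finset.sum_congr rfl fun y _ => ?_
          rw [← hflow y, Finset.sum_mul]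
          refine Finset.sum_congr rfl fun δ hδ => ?_
          rw [(Finset.mem_filter.1 hδ).2]
      _ = ∑ δ ∈ D, η δ * Eg δ.prod := Finset.sum_fiberwise D (fun δ => δ.prod) _
  -- A is positive
  have hsum1 : ∑ δ ∈ D, η δ = 1 := by
    rw [← Finset.sum_fiberwise D (fun δ => δ.prod) η]
    rw [← hqt1]
    exact Finset.sum_congr rfl fun y _ => hflow y
  obtain ⟨δ0, hδ0D, hδ0pos⟩ : ∃ δ0 ∈ D, 0 < η δ0 := by
    by_contra h
    push_neg at h
    have : ∑ δ ∈ D, η δ = 0 := Finset.sum_eq_zero fun δ hδ =>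
      le_antisymm (h δ hδ) (hη0 δ)
    rw [hsum1] at this
    exact one_ne_zero this
  have hδ0len : 0 < δ0.length := (hodd δ0 hδ0D).pos
  have hδ0ne : δ0 ≠ [] := List.ne_nil_of_length_pos hδ0len
  set s0 : G := δ0.head hδ0ne with hs0
  have hs0mem : s0 ∈ δ0 := List.head_mem hδ0ne
  have hs0S : s0 ∈ S := hsteps δ0 hδ0D s0 hs0mem
  have hterm_nonneg : ∀ s, ∀ δ ∈ D, 0 ≤ (δ.length : ℝ) * (δ.count s : ℝ) * η δ := by
    intro s δ hδ
    have := hη0 δ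
    positivity
  have hApos : 0 < A := by
    have h1 : 0 < (δ0.length : ℝ) * (δ0.count s0 : ℝ) * η δ0 := by
      have hc : 0 < δ0.count s0 := List.count_pos_iff.2 hs0mem
      have : (0:ℝ) < (δ0.length : ℝ) := by exact_mod_cast hδ0len
      have hc' : (0:ℝ) < (δ0.count s0 : ℝ) := by exact_mod_cast hc
      positivity
    have h2 : (δ0.length : ℝ) * (δ0.count s0 : ℝ) * η δ0
        ≤ ∑ δ ∈ D, (δ.length : ℝ) * (δ.count s0 : ℝ) * η δ :=
      Finset.single_le_sum (hterm_nonneg s0) hδ0D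
    have h3 : 0 < (1 / q s0) * ∑ δ ∈ D, (δ.length : ℝ) * (δ.count s0 : ℝ) * η δ := by
      have hq' := hSsupp s0 hs0S
      have : 0 < ∑ δ ∈ D, (δ.length : ℝ) * (δ.count s0 : ℝ) * η δ := lt_of_lt_of_le h1 h2
      positivity
    calc (0:ℝ) < _ := h3
      _ ≤ A := hA ▸ Finset.le_sup'
        (fun s => (1 / q s) * ∑ δ ∈ D, (δ.length : ℝ) * (δ.count s : ℝ) * η δ) hs0S
  -- comparison
  have hcomp : ∑ δ ∈ D, η δ * Eg δ.prod ≤ A * ∑ y, q y * Eg y := by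
    have step1 : ∀ δ ∈ D, η δ * Eg δ.prod
        ≤ η δ * ((δ.length : ℝ) * ∑ s ∈ S, (δ.count s : ℝ) * Eg s) := by
      intro δ hδ
      refine mul_le_mul_of_nonneg_left ?_ (hη0 δ)
      have hpb := stmt8_path_bound f δ (hodd δ hδ)
      have hmap : (δ.map Eg).sum = ∑ s ∈ S, (δ.count s : ℝ) * Eg s := by
        rw [Finset.sum_list_map_count δ Eg,
          Finset.sum_subset (fun s hs => hsteps δ hδ s (List.mem_toFinset.1 hs))
            (fun s _ hs => by
              rw [List.count_eq_zero_of_not_mem (fun h => hs (List.mem_toFinset.2 h)),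
                zero_smul])]
        exact Finset.sum_congr rfl fun s _ => by rw [nsmul_eq_mul]
      calc Eg δ.prod ≤ (δ.length : ℝ) * (δ.map (fun s => ∑ x, (f x + f (x * s))^2)).sum := hpb
        _ = (δ.length : ℝ) * ∑ s ∈ S, (δ.count s : ℝ) * Eg s := by rw [← hmap]
    calc ∑ δ ∈ D, η δ * Eg δ.prod
        ≤ ∑ δ ∈ D, η δ * ((δ.length : ℝ) * ∑ s ∈ S, (δ.count s : ℝ) * Eg s) :=
          Finset.sum_le_sum step1
      _ = ∑ s ∈ S, (∑ δ ∈ D, (δ.length : ℝ) * (δ.count s : ℝ) * η δ) * Eg s := by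
          calc ∑ δ ∈ D, η δ * ((δ.length:ℝ) * ∑ s ∈ S, (δ.count s:ℝ) * Eg s)
              = ∑ δ ∈ D, ∑ s ∈ S, (δ.length:ℝ) * (δ.count s:ℝ) * η δ * Eg s := by
                refine Finset.sum_congr rfl fun δ _ => ?_
                rw [Finset.mul_sum, Finset.mul_sum]
                exact Finset.sum_congr rfl fun s _ => by ring
            _ = ∑ s ∈ S, ∑ δ ∈ D, (δ.length:ℝ) * (δ.count s:ℝ) * η δ * Eg s :=
                Finset.sum_comm
            _ = ∑ s ∈ S, (∑ δ ∈ D, (δ.length:ℝ) * (δ.count s:ℝ) * η δ) * Eg s := by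
                refine Finset.sum_congr rfl fun s _ => ?_
                rw [Finset.sum_mul]
      _ ≤ ∑ s ∈ S, A * (q s * Eg s) := by
          refine Finset.sum_le_sum fun s hs => ?_
          have hqs := hSsupp s hs
          have hcoef : (1 / q s) * ∑ δ ∈ D, (δ.length : ℝ) * (δ.count s : ℝ) * η δ ≤ A :=
            hA ▸ Finset.le_sup'
              (fun s => (1 / q s) * ∑ δ ∈ D, (δ.length : ℝ) * (δ.count s : ℝ) * η δ) hs
          have : ∑ δ ∈ D, (δ.length : ℝ) * (δ.count s : ℝ) * η δ
              = q s * ((1 / q s) * ∑ δ ∈ D, (δ.length : ℝ) * (δ.count s : ℝ) * η δ) := by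
            field_simp
          rw [this]
          have hEgs := hEg0 s
          calc q s * ((1 / q s) * ∑ δ ∈ D, (δ.length : ℝ) * (δ.count s : ℝ) * η δ) * Eg s
              ≤ q s * A * Eg s := by
                refine mul_le_mul_of_nonneg_right ?_ hEgs
                exact mul_le_mul_of_nonneg_left hcoef hqs.le
            _ = A * (q s * Eg s) := by ring
      _ = A * ∑ s ∈ S, q s * Eg s := by rw [Finset.mul_sum]
      _ ≤ A * ∑ y, q y * Eg y := by
          refine mul_le_mul_of_nonneg_left ?_ hApos.le
          refine Finset.sum_le_sum_of_subset_of_nonneg (Finset.subset_univ S) ?_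
          intro y _ _
          exact mul_nonneg (hq0 y) (hEg0 y)
  -- put it together
  have hmain : 2*N + 2*βtmin*N ≤ A * (2*N + 2*β*N) := by
    calc 2*N + 2*βtmin*N ≤ ∑ y, qt y * Eg y := hqt_energy
      _ = ∑ δ ∈ D, η δ * Eg δ.prod := hdecomp
      _ ≤ A * ∑ y, q y * Eg y := hcomp
      _ = A * (2*N + 2*β*N) := by rw [hq_energy]
  have hfin : 1 + βtmin ≤ A * (1 + β) := by nlinarith [hN, hmain]
  have h2 : (1 + βtmin) / A ≤ 1 + β := by
    rw [div_le_iff₀ hApos]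
    nlinarith [hfin]
  linarith
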